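/- There exists an n×n image I with GD₂(I) = Ω(1) and LD₂(I) = O(1/n²): namely, the image where every pixel in row i has value i/n. -/

import Mathlib

lemma sum_id_real (n : ℕ) : ∑ i ∈ Finset.range n, (i:ℝ) = n*(n-1)/2 := by
  induction n with
  | zero => simp
  | succ k ih => rw [Finset.sum_range_succ, ih]; push_cast; ring

lemma sum_sq_real (n : ℕ) : ∑ i ∈ Finset.range n, (i:ℝ)^2 = n*(n-1)*(2*n-1)/6 := by
  induction n with
  | zero => simp
  | succ k ih => rw [Finset.sum_range_succ, ih]; push_cast; ring

lemma double_sum (n : ℕ) :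
    ∑ i ∈ Finset.range n, ∑ j ∈ Finset.range n, ((i:ℝ)-(j:ℝ))^2
      = (n:ℝ)^2*((n:ℝ)^2-1)/6 := by
  have h1 := sum_id_real n
  have h2 := sum_sq_real n
  have : ∀ i ∈ Finset.range n, ∑ j ∈ Finset.range n, ((i:ℝ)-(j:ℝ))^2
      = (n:ℝ)*(i:ℝ)^2 - 2*(i:ℝ)*((n:ℝ)*((n:ℝ)-1)/2) + (n:ℝ)*((n:ℝ)-1)*(2*(n:ℝ)-1)/6 := by
    intro i _
    have : ∑ j ∈ Finset.range n, ((i:ℝ)-(j:ℝ))^2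
        = ∑ j ∈ Finset.range n, ((i:ℝ)^2 - 2*(i:ℝ)*(j:ℝ) + (j:ℝ)^2) := by
      apply Finset.sum_congr rfl; intro j _; ring
    rw [this, Finset.sum_add_distrib, Finset.sum_sub_distrib, Finset.sum_const,
      Finset.card_range, ← Finset.mul_sum, h1, h2, nsmul_eq_mul]
  rw [Finset.sum_congr rfl this, Finset.sum_add_distrib, Finset.sum_sub_distrib,
    Finset.sum_const, Finset.card_range, ← Finset.mul_sum, h2, nsmul_eq_mul]
  have h3 : ∑ x ∈ Finset.range n, 2*(x:ℝ)*((n:ℝ)*((n:ℝ)-1)/2)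
      = (2*((n:ℝ)*((n:ℝ)-1)/2)) * ∑ x ∈ Finset.range n, (x:ℝ) := by
    rw [Finset.mul_sum]
    exact Finset.sum_congr rfl fun x _ => by ring
  rw [h3, h1]; ring

/-- Grid adjacency on an `n × n` image. -/
def adj (n : ℕ) (p q : Fin n × Fin n) : Prop :=
  (p.1 = q.1 ∧ ((p.2 : ℕ) + 1 = (q.2 : ℕ) ∨ (q.2 : ℕ) + 1 = (p.2 : ℕ))) ∨
  (p.2 = q.2 ∧ ((p.1 : ℕ) + 1 = (q.1 : ℕ) ∨ (q.1 : ℕ) + 1 = (p.1 : ℕ)))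

instance (n : ℕ) : DecidableRel (adj n) := fun p q => by unfold adj; infer_instance

/-- The set of neighbors of a pixel `p`. -/
def nbrs (n : ℕ) (p : Fin n × Fin n) : Finset (Fin n × Fin n) :=
  Finset.univ.filter (adj n p)

/-- The quadratic local discrepancy: the average of `(x_p - x_q)²` over
adjacent pairs. -/
noncomputable def LD2 (n : ℕ) (x : Fin n × Fin n → ℝ) : ℝ :=
  (∑ p : Fin n × Fin n, ((nbrs n p).card : ℝ))⁻¹ *
    ∑ p, ∑ q ∈ nbrs n p, (x p - x q)^2

/-- The image in which every pixel in row `i` has value `i/n` has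
`GD₂ = Ω(1)` and `LD₂ = O(1/n²)`. -/
theorem stmt9 : ∃ c₁ : ℝ, 0 < c₁ ∧ ∃ c₂ : ℝ, 0 < c₂ ∧ ∀ n : ℕ, 2 ≤ n →
    ((1 / (n:ℝ)^4) * ∑ p : Fin n × Fin n, ∑ q : Fin n × Fin n,
        (((p.1 : ℕ) : ℝ)/n - ((q.1 : ℕ) : ℝ)/n)^2 ≥ c₁) ∧
    LD2 n (fun p => ((p.1 : ℕ) : ℝ)/n) ≤ c₂ / (n:ℝ)^2 := by
  refine ⟨1/8, by norm_num, 1, by norm_num, fun n hn => ?_⟩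
  have hn0 : (0:ℝ) < n := by positivity
  have hn2 : (2:ℝ) ≤ n := by exact_mod_cast hn
  constructor
  · have e1 : ∑ p : Fin n × Fin n, ∑ q : Fin n × Fin n,
        (((p.1 : ℕ):ℝ)/n - ((q.1 : ℕ):ℝ)/n)^2
        = (n:ℝ)^2 * ∑ i : Fin n, ∑ j : Fin n, (((i:ℕ):ℝ)/n - ((j:ℕ):ℝ)/n)^2 := by
      simp [Fintype.sum_prod_type, Finset.mul_sum, Finset.card_univ]
      exact Finset.sum_congr rfl fun i _ => Finset.sum_congr rfl fun j _ => by ring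
    rw [e1]
    have e2 : ∑ i : Fin n, ∑ j : Fin n, (((i:ℕ):ℝ)/n - ((j:ℕ):ℝ)/n)^2
        = (∑ i ∈ Finset.range n, ∑ j ∈ Finset.range n, ((i:ℝ)-(j:ℝ))^2) / (n:ℝ)^2 := by
      rw [Finset.sum_div,
        Fin.sum_univ_eq_sum_range (fun i => ∑ j : Fin n, (((i:ℝ))/n - ((j:ℕ):ℝ)/n)^2) n]
      refine Finset.sum_congr rfl fun i _ => ?_
      rw [Finset.sum_div,
        Fin.sum_univ_eq_sum_range (fun j => (((i:ℝ))/n - ((j:ℝ))/n)^2) n]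
      refine Finset.sum_congr rfl fun j _ => ?_
      rw [div_sub_div_same, div_pow]
    rw [e2, double_sum]
    have hne : (n:ℝ) ≠ 0 := ne_of_gt hn0
    rw [ge_iff_le, show (1/(n:ℝ)^4) * ((n:ℝ)^2 * ((n:ℝ)^2*((n:ℝ)^2-1)/6 / (n:ℝ)^2))
        = ((n:ℝ)^2-1)/(6*(n:ℝ)^2) from by field_simp,
      le_div_iff₀ (by positivity)]
    nlinarith
  · have hterm : ∀ p : Fin n × Fin n, ∀ q ∈ nbrs n p,
        (((p.1:ℕ):ℝ)/n - ((q.1:ℕ):ℝ)/n)^2 ≤ 1/(n:ℝ)^2 := by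
      intro p q hq
      rw [nbrs, Finset.mem_filter] at hq
      have hd : ((((p.1:ℕ):ℝ)) - (((q.1:ℕ):ℝ)))^2 ≤ 1 := by
        rcases hq.2 with ⟨h1, _⟩ | ⟨_, h1 | h1⟩
        · rw [h1]; norm_num
        · have : ((q.1:ℕ):ℝ) = ((p.1:ℕ):ℝ) + 1 := by exact_mod_cast h1.symm
          rw [this]; norm_num
        · have : ((p.1:ℕ):ℝ) = ((q.1:ℕ):ℝ) + 1 := by exact_mod_cast h1.symm
          rw [this]; norm_num
      rw [div_sub_div_same, div_pow]
      apply div_le_div_of_nonneg_right ?_ (by positivity) |>.trans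
      · exact le_of_eq rfl
      · exact hd
    have hS : ∑ p : Fin n × Fin n, ∑ q ∈ nbrs n p, (((p.1:ℕ):ℝ)/n - ((q.1:ℕ):ℝ)/n)^2
        ≤ (∑ p : Fin n × Fin n, ((nbrs n p).card : ℝ)) * (1/(n:ℝ)^2) := by
      rw [Finset.sum_mul]
      refine Finset.sum_le_sum fun p _ => ?_
      have := Finset.sum_le_card_nsmul (nbrs n p)
        (fun q => (((p.1:ℕ):ℝ)/n - ((q.1:ℕ):ℝ)/n)^2) (1/(n:ℝ)^2) (hterm p)
      simpa [nsmul_eq_mul] using this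
    have hTpos : 0 < ∑ p : Fin n × Fin n, ((nbrs n p).card : ℝ) := by
      have h01 : (1:ℕ) < n := hn
      refine Finset.sum_pos' (fun i _ => by positivity)
        ⟨(⟨0, by omega⟩, ⟨0, by omega⟩), Finset.mem_univ _, ?_⟩
      have : ((⟨0, by omega⟩ : Fin n), (⟨1, by omega⟩ : Fin n)) ∈
          nbrs n (⟨0, by omega⟩, ⟨0, by omega⟩) := by
        simp [nbrs, adj]
      have hc : 0 < (nbrs n (⟨0, by omega⟩, ⟨0, by omega⟩)).card :=
        Finset.card_pos.mpr ⟨_, this⟩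
      exact_mod_cast hc
    rw [LD2]
    calc (∑ p : Fin n × Fin n, ((nbrs n p).card : ℝ))⁻¹ *
          ∑ p : Fin n × Fin n, ∑ q ∈ nbrs n p, (((p.1:ℕ):ℝ)/n - ((q.1:ℕ):ℝ)/n)^2
        ≤ (∑ p : Fin n × Fin n, ((nbrs n p).card : ℝ))⁻¹ *
          ((∑ p : Fin n × Fin n, ((nbrs n p).card : ℝ)) * (1/(n:ℝ)^2)) :=
          mul_le_mul_of_nonneg_left hS (inv_nonneg.mpr hTpos.le)
      _ = 1/(n:ℝ)^2 := by
          rw [← mul_assoc, inv_mul_cancel₀ (ne_of_gt hTpos), one_mul]
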